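/- The Cayley graph of σ_m on (ZMod 2)^{2m} (vertices x,y adjacent iff σ_m(x+y)=1) is a strongly regular graph with parameters v = 4^m, k = 2^{2m−1} − 2^{m−1}, λ = μ = 2^{2m−2} − 2^{m−1}. -/

import Mathlib

open Finset


/-- The sign-of-square function `σ_m` on bit strings: the parity of the number of
bit-pairs equal to `01`. -/
def sigma (m : ℕ) (i : Fin (2 * m) → ZMod 2) : ZMod 2 :=
  ∑ j : Fin m,
    if i ⟨2 * j.1, by have := j.2; omega⟩ = 0 ∧ i ⟨2 * j.1 + 1, by have := j.2; omega⟩ = 1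
    then 1 else 0

/-- The Cayley graph of a Boolean function `f`: vertices `x ≠ y` adjacent iff `f (x + y) = 1`. -/
def cayley (n : ℕ) (f : (Fin n → ZMod 2) → ZMod 2) : SimpleGraph (Fin n → ZMod 2) where
  Adj x y := x ≠ y ∧ f (x + y) = 1
  symm := by constructor; intro x y h; exact ⟨h.1.symm, by rw [add_comm]; exact h.2⟩
  loopless := by constructor; intro x h; exact h.1 rfl

instance (n : ℕ) (f : (Fin n → ZMod 2) → ZMod 2) : DecidableRel (cayley n f).Adj :=
  fun _ _ => instDecidableAnd


def f2 (g : ZMod 2 × ZMod 2) : ZMod 2 := if g.1 = 0 ∧ g.2 = 1 then 1 else 0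
def tau (m : ℕ) (p : Fin m → ZMod 2 × ZMod 2) : ZMod 2 := ∑ j, f2 (p j)

def pack (m : ℕ) (i : Fin (2*m) → ZMod 2) (j : Fin m) : ZMod 2 × ZMod 2 :=
  (i ⟨2*j.1, by have := j.2; omega⟩, i ⟨2*j.1+1, by have := j.2; omega⟩)

lemma pack_add (m : ℕ) (x y : Fin (2*m) → ZMod 2) :
    pack m (x + y) = pack m x + pack m y := rfl

lemma pack_zero (m : ℕ) : pack m 0 = 0 := rfl

lemma sigma_eq_tau (m : ℕ) (i : Fin (2*m) → ZMod 2) : sigma m i = tau m (pack m i) := rfl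

lemma pack_injective (m : ℕ) : Function.Injective (pack m) := by
  intro x y h
  funext k
  have hk := k.2
  by_cases h2 : k.1 % 2 = 0
  · have hke : k = (⟨2 * ((⟨k.1/2, by omega⟩ : Fin m)).1, by omega⟩ : Fin (2*m)) := by
      apply Fin.ext; simp; omega
    rw [hke]
    exact congrArg Prod.fst (congrFun h ⟨k.1/2, by omega⟩)
  · have hke : k = (⟨2 * ((⟨k.1/2, by omega⟩ : Fin m)).1 + 1, by omega⟩ : Fin (2*m)) := by
      apply Fin.ext; simp; omega
    rw [hke]
    exact congrArg Prod.snd (congrFun h ⟨k.1/2, by omega⟩)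

lemma pack_bijective (m : ℕ) : Function.Bijective (pack m) :=
  (Fintype.bijective_iff_injective_and_card _).2
    ⟨pack_injective m, by simp [pow_mul]⟩

lemma sigma_zero (m : ℕ) : sigma m 0 = 0 := by
  have h01 : ((0:ZMod 2) = 1) = False := by simp
  simp [sigma, h01]


def chi (x : ZMod 2) : ℤ := if x = 0 then 1 else -1

lemma chi_add (a b : ZMod 2) : chi (a + b) = chi a * chi b := by revert a b; decide

lemma tau_cons (m : ℕ) (g : ZMod 2 × ZMod 2) (p : Fin m → ZMod 2 × ZMod 2) :
    tau (m+1) (Fin.cons g p) = f2 g + tau m p := by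
  simp [tau, Fin.sum_univ_succ]

lemma cons_add_cons (m : ℕ) (g h : ZMod 2 × ZMod 2) (p q : Fin m → ZMod 2 × ZMod 2) :
    (Fin.cons g p : Fin (m+1) → ZMod 2 × ZMod 2) + Fin.cons h q = Fin.cons (g+h) (p+q) := by
  funext k
  refine Fin.cases ?_ ?_ k <;> simp

lemma sum_cons_decomp {M : Type*} [AddCommMonoid M] (m : ℕ)
    (F : (Fin (m+1) → ZMod 2 × ZMod 2) → M) :
    ∑ p : Fin (m+1) → ZMod 2 × ZMod 2, F p
      = ∑ g : ZMod 2 × ZMod 2, ∑ p : Fin m → ZMod 2 × ZMod 2, F (Fin.cons g p) := by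
  calc ∑ p : Fin (m+1) → ZMod 2 × ZMod 2, F p
      = ∑ x : (ZMod 2 × ZMod 2) × (Fin m → ZMod 2 × ZMod 2), F (Fin.cons x.1 x.2) :=
        (Fintype.sum_equiv (Fin.consEquiv (fun _ => ZMod 2 × ZMod 2)) _ _ (fun x => rfl)).symm
    _ = _ := Fintype.sum_prod_type _

lemma sum_chi_tau (m : ℕ) : ∑ p : Fin m → ZMod 2 × ZMod 2, chi (tau m p) = 2 ^ m := by
  induction m with
  | zero => simp [tau, chi]
  | succ n ih =>
      rw [sum_cons_decomp]
      have : ∀ g p, chi (tau (n+1) (Fin.cons g p)) = chi (f2 g) * chi (tau n p) := by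
        intro g p; rw [tau_cons, chi_add]
      simp only [this, ← Finset.mul_sum, ← Finset.sum_mul, ih]
      have h4 : ∑ g : ZMod 2 × ZMod 2, chi (f2 g) = 2 := by decide
      rw [h4]; ring

lemma pair_autocorr (d : ZMod 2 × ZMod 2) :
    ∑ g : ZMod 2 × ZMod 2, chi (f2 g) * chi (f2 (g + d)) = if d = 0 then 4 else 0 := by
  revert d; decide

lemma autocorr (m : ℕ) (d : Fin m → ZMod 2 × ZMod 2) :
    ∑ p : Fin m → ZMod 2 × ZMod 2, chi (tau m p) * chi (tau m (p + d))
      = if d = 0 then 4 ^ m else 0 := by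
  induction m with
  | zero =>
      have : d = 0 := Subsingleton.elim d 0
      simp [this, tau, chi]
  | succ n ih =>
      rw [sum_cons_decomp]
      have hd : d = Fin.cons (d 0) (Fin.tail d) := (Fin.cons_self_tail d).symm
      have key : ∀ g p, chi (tau (n+1) (Fin.cons g p)) * chi (tau (n+1) (Fin.cons g p + d))
          = (chi (f2 g) * chi (f2 (g + d 0))) * (chi (tau n p) * chi (tau n (p + Fin.tail d))) := by
        intro g p
        rw [hd, cons_add_cons, tau_cons, tau_cons, chi_add, chi_add]
        simp only [Fin.cons_zero, Fin.tail_cons]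
        ring
      simp only [key]
      simp only [← Finset.mul_sum]
      rw [← Finset.sum_mul, pair_autocorr, ih]
      have hcons00 : (Fin.cons (0 : ZMod 2 × ZMod 2) (0 : Fin n → ZMod 2 × ZMod 2) :
          Fin (n+1) → ZMod 2 × ZMod 2) = 0 := by
        funext k; refine Fin.cases ?_ ?_ k <;> simp
      by_cases hdd : d = 0
      · rw [hdd]
        simp only [Pi.zero_apply, if_pos rfl,
          show Fin.tail (0 : Fin (n+1) → ZMod 2 × ZMod 2) = 0 from rfl, if_true]
        ring
      · obtain (h0 | ht) : d 0 ≠ 0 ∨ Fin.tail d ≠ 0 := by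
          by_contra hc
          push_neg at hc
          exact hdd (by rw [hd, hc.1, hc.2, hcons00])
        · simp [hdd, h0]
        · simp [hdd, ht]

lemma chi_expand1 (a : ZMod 2) : chi a = 1 - 2*(if a = 1 then (1:ℤ) else 0) := by
  revert a; decide

lemma chi_expand (a b : ZMod 2) : chi a * chi b
    = 1 - 2*(if a = 1 then (1:ℤ) else 0) - 2*(if b = 1 then (1:ℤ) else 0)
      + 4*(if a = 1 ∧ b = 1 then (1:ℤ) else 0) := by
  revert a b; decide

lemma two_mul_B (m : ℕ) :
    2 * (univ.filter fun i : Fin (2*m) → ZMod 2 => sigma m i = 1).card + 2^m = 2^(2*m) := by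
  have h1 : ∑ i : Fin (2*m) → ZMod 2, chi (sigma m i) = 2 ^ m := by
    rw [show (fun i : Fin (2*m) → ZMod 2 => chi (sigma m i)) = fun i => chi (tau m (pack m i)) from rfl]
    rw [Fintype.sum_bijective (pack m) (pack_bijective m) _ (fun p => chi (tau m p)) (fun i => rfl)]
    exact sum_chi_tau m
  have h2 : ∑ i : Fin (2*m) → ZMod 2, chi (sigma m i)
      = 2^(2*m) - 2 * ((univ.filter fun i : Fin (2*m) → ZMod 2 => sigma m i = 1).card : ℤ) := by
    calc ∑ i : Fin (2*m) → ZMod 2, chi (sigma m i)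
        = ∑ i : Fin (2*m) → ZMod 2, (1 - 2*(if sigma m i = 1 then (1:ℤ) else 0)) :=
          Finset.sum_congr rfl (fun i _ => chi_expand1 _)
      _ = _ := by
          rw [Finset.sum_sub_distrib, ← Finset.mul_sum, Finset.sum_boole, Finset.sum_const]
          simp [card_univ]
  have h3 : (2 * ((univ.filter fun i : Fin (2*m) → ZMod 2 => sigma m i = 1).card : ℤ) + 2^m)
      = 2^(2*m) := by rw [h1] at h2; linarith
  exact_mod_cast h3

lemma card_B (m : ℕ) (hm : 1 ≤ m) :
    (univ.filter fun i : Fin (2*m) → ZMod 2 => sigma m i = 1).card = 2^(2*m-1) - 2^(m-1) := by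
  have h := two_mul_B m
  have e3 : 2 * 2^(m-1) = 2^m := by rw [← pow_succ']; congr 1; omega
  have e4 : 2 * 2^(2*m-1) = 2^(2*m) := by rw [← pow_succ']; congr 1; omega
  refine Nat.eq_sub_of_add_eq (Nat.eq_of_mul_eq_mul_left (show 0 < 2 by norm_num) ?_)
  rw [Nat.mul_add, e3, e4, h]

lemma card_C (m : ℕ) (hm : 1 ≤ m) (d : Fin (2*m) → ZMod 2) (hd : d ≠ 0) :
    (univ.filter fun w : Fin (2*m) → ZMod 2 => sigma m w = 1 ∧ sigma m (w+d) = 1).card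
      = 2^(2*m-2) - 2^(m-1) := by
  have hpd : pack m d ≠ 0 := fun h => hd (pack_injective m (h.trans (pack_zero m).symm))
  have h0 : ∑ i : Fin (2*m) → ZMod 2, chi (sigma m i) * chi (sigma m (i + d)) = 0 := by
    have ha := autocorr m (pack m d)
    rw [if_neg hpd] at ha
    rw [← ha]
    refine Fintype.sum_bijective (pack m) (pack_bijective m) _ _ (fun i => ?_)
    rw [sigma_eq_tau, sigma_eq_tau, pack_add]
  have hBB : ∑ i : Fin (2*m) → ZMod 2, (if sigma m (i + d) = 1 then (1:ℤ) else 0)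
      = ∑ i : Fin (2*m) → ZMod 2, (if sigma m i = 1 then (1:ℤ) else 0) := by
    refine Fintype.sum_bijective (fun i => i + d) (Equiv.addRight d).bijective _ _ (fun i => rfl)
  have hexp : (0:ℤ) = 2^(2*m)
      - 2 * ((univ.filter fun i : Fin (2*m) → ZMod 2 => sigma m i = 1).card : ℤ)
      - 2 * ((univ.filter fun i : Fin (2*m) → ZMod 2 => sigma m i = 1).card : ℤ)
      + 4 * ((univ.filter fun w : Fin (2*m) → ZMod 2 =>
          sigma m w = 1 ∧ sigma m (w+d) = 1).card : ℤ) := by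
    rw [← h0]
    calc ∑ i : Fin (2*m) → ZMod 2, chi (sigma m i) * chi (sigma m (i + d))
        = ∑ i : Fin (2*m) → ZMod 2, (1 - 2*(if sigma m i = 1 then (1:ℤ) else 0)
            - 2*(if sigma m (i+d) = 1 then (1:ℤ) else 0)
            + 4*(if sigma m i = 1 ∧ sigma m (i+d) = 1 then (1:ℤ) else 0)) :=
          Finset.sum_congr rfl (fun i _ => chi_expand _ _)
      _ = _ := by
          rw [Finset.sum_add_distrib, Finset.sum_sub_distrib, Finset.sum_sub_distrib,
            Finset.sum_const, ← Finset.mul_sum, ← Finset.mul_sum, ← Finset.mul_sum,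
            hBB, Finset.sum_boole, Finset.sum_boole]
          simp [card_univ]
  have hB := two_mul_B m
  have hBz : 2 * ((univ.filter fun i : Fin (2*m) → ZMod 2 => sigma m i = 1).card : ℤ) + 2^m
      = 2^(2*m) := by exact_mod_cast hB
  have hz : 4 * ((univ.filter fun w : Fin (2*m) → ZMod 2 =>
      sigma m w = 1 ∧ sigma m (w+d) = 1).card : ℤ) + 2 * 2^m = 2^(2*m) := by linarith
  have hn : 4 * (univ.filter fun w : Fin (2*m) → ZMod 2 =>
      sigma m w = 1 ∧ sigma m (w+d) = 1).card + 2 * 2^m = 2^(2*m) := by exact_mod_cast hz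
  have e3 : (4:ℕ) * 2^(m-1) = 2 * 2^m := by
    have : 2 * 2^(m-1) = 2^m := by rw [← pow_succ']; congr 1; omega
    calc (4:ℕ) * 2^(m-1) = 2 * (2 * 2^(m-1)) := by ring
      _ = 2 * 2^m := by rw [this]
  have e4 : (4:ℕ) * 2^(2*m-2) = 2^(2*m) := by
    rw [show (4:ℕ) = 2^2 from rfl, ← pow_add]; congr 1; omega
  refine Nat.eq_sub_of_add_eq (Nat.eq_of_mul_eq_mul_left (show 0 < 4 by norm_num) ?_)
  rw [Nat.mul_add, e3, e4, hn]

lemma add_self_V (n : ℕ) (a : Fin n → ZMod 2) : a + a = 0 := by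
  funext k
  have : ∀ t : ZMod 2, t + t = 0 := by decide
  exact this (a k)

lemma cancel_V (n : ℕ) (a b : Fin n → ZMod 2) : a + (a + b) = b := by
  rw [← add_assoc, add_self_V, zero_add]

lemma degree_cayley (m : ℕ) (x : Fin (2*m) → ZMod 2) :
    (cayley (2*m) (sigma m)).degree x
      = (univ.filter fun i : Fin (2*m) → ZMod 2 => sigma m i = 1).card := by
  rw [SimpleGraph.degree]
  rw [show (cayley (2*m) (sigma m)).neighborFinset x
      = univ.filter (fun y => (cayley (2*m) (sigma m)).Adj x y) from by
    ext y; simp [SimpleGraph.mem_neighborFinset]]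
  refine Finset.card_bij' (fun y _ => x + y) (fun w _ => x + w) ?_ ?_ ?_ ?_
  · intro y hy
    rw [Finset.mem_filter] at hy ⊢
    exact ⟨Finset.mem_univ _, hy.2.2⟩
  · intro w hw
    rw [Finset.mem_filter] at hw ⊢
    refine ⟨Finset.mem_univ _, ?_, ?_⟩
    · intro hxy
      have hw0 : w = 0 := by
        have := congrArg (fun z => x + z) hxy
        simpa [cancel_V, add_self_V] using this.symm
      rw [hw0, sigma_zero] at hw
      exact one_ne_zero hw.2.symm
    · rw [cancel_V]; exact hw.2
  · intro y _; exact cancel_V _ _ _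
  · intro w _; exact cancel_V _ _ _

lemma common_cayley (m : ℕ) (x y : Fin (2*m) → ZMod 2) (hxy : x ≠ y) :
    Fintype.card ((cayley (2*m) (sigma m)).commonNeighbors x y)
      = (univ.filter fun w : Fin (2*m) → ZMod 2 =>
          sigma m w = 1 ∧ sigma m (w + (x + y)) = 1).card := by
  rw [← Set.toFinset_card]
  rw [show ((cayley (2*m) (sigma m)).commonNeighbors x y).toFinset
      = univ.filter (fun z => (cayley (2*m) (sigma m)).Adj x z ∧
          (cayley (2*m) (sigma m)).Adj y z) from by
    ext z; simp [SimpleGraph.mem_commonNeighbors]]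
  refine Finset.card_bij' (fun z _ => x + z) (fun w _ => x + w) ?_ ?_ ?_ ?_
  · intro z hz
    rw [Finset.mem_filter] at hz ⊢
    obtain ⟨-, ⟨-, h1⟩, ⟨-, h2⟩⟩ := hz
    refine ⟨Finset.mem_univ _, h1, ?_⟩
    have : (x + z) + (x + y) = y + z := by
      rw [add_add_add_comm, add_self_V, zero_add, add_comm]
    rw [this]; exact h2
  · intro w hw
    rw [Finset.mem_filter] at hw ⊢
    obtain ⟨-, h1, h2⟩ := hw
    have hyz : y + (x + w) = w + (x + y) := by
      rw [← add_assoc, add_comm y x, add_comm]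
    refine ⟨Finset.mem_univ _, ⟨?_, by rw [cancel_V]; exact h1⟩, ⟨?_, by rw [hyz]; exact h2⟩⟩
    · intro h
      have hw0 : w = 0 := by
        have := congrArg (fun z => x + z) h
        simpa [cancel_V, add_self_V] using this.symm
      rw [hw0, sigma_zero] at h1
      exact one_ne_zero h1.symm
    · intro h
      have hxw : y = x + w := h
      have hz : w + (x + y) = 0 := by rw [hxw, cancel_V, add_self_V]
      rw [hz, sigma_zero] at h2
      exact one_ne_zero h2.symm
  · intro z _; exact cancel_V _ _ _
  · intro w _; exact cancel_V _ _ _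

/-- The Cayley graph of `σ_m` is strongly regular with parameters
`v = 4^m`, `k = 2^{2m-1} - 2^{m-1}`, `λ = μ = 2^{2m-2} - 2^{m-1}`. -/
theorem cayley_sigma_isSRG (m : ℕ) (hm : 1 ≤ m) :
    (cayley (2 * m) (sigma m)).IsSRGWith (4 ^ m) (2 ^ (2 * m - 1) - 2 ^ (m - 1))
      (2 ^ (2 * m - 2) - 2 ^ (m - 1)) (2 ^ (2 * m - 2) - 2 ^ (m - 1)) := by
  have hne : ∀ x y : Fin (2*m) → ZMod 2, x ≠ y → x + y ≠ 0 := by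
    intro x y h hxy0
    refine h ?_
    have := congrArg (fun z => x + z) hxy0
    simpa [cancel_V] using this.symm

  constructor
  · simp [pow_mul]
  · intro x; rw [degree_cayley, card_B m hm]
  · intro x y h
    rw [common_cayley m x y h.1, card_C m hm _ (hne x y h.1)]
  · intro x y hxy hna
    rw [common_cayley m x y hxy, card_C m hm _ (hne x y hxy)]
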